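/- For x = (x₁,x₂) ∈ (−π,π]², the gradient of F vanishes at x (equivalently, sin(x₁) + sin(x₁−x₂) = 0 and sin(x₂) − sin(x₁−x₂) = 0) if and only if x belongs to the six-element set {(π,π), (0,π), (0,0), (π,0), (2π/3,−2π/3), (−2π/3,2π/3)}. -/
import Mathlib


open scoped ENNReal
open Filter

noncomputable section

/-- The Hilbert space `ℓ²(ℤ², ℂ)`. -/
abbrev H2 : Type := lp (fun _ : ℤ × ℤ => ℂ) 2

/-- The triangular-lattice Laplacian, acting pointwise on functions `ℤ² → ℂ`. -/
def lapT (f : ℤ × ℤ → ℂ) : ℤ × ℤ → ℂ := fun n =>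
  (1/6 : ℂ) * (f (n.1 + 1, n.2) + f (n.1 - 1, n.2) + f (n.1, n.2 + 1)
    + f (n.1, n.2 - 1) + f (n.1 + 1, n.2 - 1) + f (n.1 - 1, n.2 + 1))

/-- The symbol `F(x₁,x₂) = (1/3)(cos x₁ + cos x₂ + cos (x₁ - x₂))`. -/
def symbF (x : ℝ × ℝ) : ℝ := (1/3) * (Real.cos x.1 + Real.cos x.2 + Real.cos (x.1 - x.2))

/-- `∂₁ F`. -/
def d1F (x : ℝ × ℝ) : ℝ := -(1/3) * (Real.sin x.1 + Real.sin (x.1 - x.2))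

/-- `∂₂ F`. -/
def d2F (x : ℝ × ℝ) : ℝ := -(1/3) * (Real.sin x.2 - Real.sin (x.1 - x.2))

/-- Japanese bracket `⟨t⟩ = √(1/2 + t²)`. -/
def jap (t : ℝ) : ℝ := Real.sqrt (1/2 + t^2)

/-- The weight `Λ(n₁,n₂) = ⟨n₁⟩ + ⟨n₂⟩`. -/
def Lam (n : ℤ × ℤ) : ℝ := jap (n.1 : ℝ) + jap (n.2 : ℝ)

/-- The conjugate operator `A`, acting pointwise on functions `ℤ² → ℂ`. -/
def opA (f : ℤ × ℤ → ℂ) : ℤ × ℤ → ℂ := fun n =>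
  (Complex.I / 6) *
    (((n.1 : ℂ) + 1/2) * f (n.1 + 1, n.2) - ((n.1 : ℂ) - 1/2) * f (n.1 - 1, n.2)
      + ((n.2 : ℂ) + 1/2) * f (n.1, n.2 + 1) - ((n.2 : ℂ) - 1/2) * f (n.1, n.2 - 1)
      + ((n.2 : ℂ) - (n.1 : ℂ) + 1) * f (n.1 - 1, n.2 + 1)
      + ((n.1 : ℂ) - (n.2 : ℂ) + 1) * f (n.1 + 1, n.2 - 1))

/-- The perturbed Laplacian `Δ̃` with weight `m`, acting pointwise on functions `ℤ² → ℂ`: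
`(Δ̃ f)(n) = (1/6) Σ_{l ∼ n} f(l) / (√(m n) √(m l))`. -/
def lapPert (m : ℤ × ℤ → ℝ) (f : ℤ × ℤ → ℂ) : ℤ × ℤ → ℂ := fun n =>
  (1/6 : ℂ) *
    (f (n.1 + 1, n.2) / ((Real.sqrt (m n) * Real.sqrt (m (n.1 + 1, n.2)) : ℝ) : ℂ)
      + f (n.1 - 1, n.2) / ((Real.sqrt (m n) * Real.sqrt (m (n.1 - 1, n.2)) : ℝ) : ℂ)
      + f (n.1, n.2 + 1) / ((Real.sqrt (m n) * Real.sqrt (m (n.1, n.2 + 1)) : ℝ) : ℂ)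
      + f (n.1, n.2 - 1) / ((Real.sqrt (m n) * Real.sqrt (m (n.1, n.2 - 1)) : ℝ) : ℂ)
      + f (n.1 + 1, n.2 - 1) / ((Real.sqrt (m n) * Real.sqrt (m (n.1 + 1, n.2 - 1)) : ℝ) : ℂ)
      + f (n.1 - 1, n.2 + 1) / ((Real.sqrt (m n) * Real.sqrt (m (n.1 - 1, n.2 + 1)) : ℝ) : ℂ))


private lemma sin_zero_cases (t : ℝ) (ht : t ∈ Set.Ioc (-Real.pi) Real.pi)
    (hs : Real.sin t = 0) : t = 0 ∨ t = Real.pi := by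
  rw [Real.sin_eq_zero_iff] at hs
  obtain ⟨n, hn⟩ := hs
  have hpi := Real.pi_pos
  have h1 : (-1 : ℝ) < n := by
    by_contra h
    push_neg at h
    have : (n : ℝ) * Real.pi ≤ -1 * Real.pi := by
      apply mul_le_mul_of_nonneg_right h hpi.le
    simp only [hn] at this
    have := ht.1
    linarith
  have h2 : (n : ℝ) ≤ 1 := by
    by_contra h
    push_neg at h
    have : (1 : ℝ) * Real.pi < n * Real.pi := by
      apply mul_lt_mul_of_pos_right h hpi
    rw [hn] at this
    have := ht.2
    linarith
  have h1' : (-1 : ℤ) < n := by exact_mod_cast h1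
  have h2' : (n : ℤ) ≤ 1 := by exact_mod_cast h2
  interval_cases n
  · left; simpa using hn.symm
  · right; simpa using hn.symm

private lemma cos_two_pi_div_three : Real.cos (2 * Real.pi / 3) = -(1/2) := by
  have : 2 * Real.pi / 3 = Real.pi - Real.pi / 3 := by ring
  rw [this, Real.cos_pi_sub, Real.cos_pi_div_three]

private lemma eq_two_pi_div_three (t : ℝ) (ht : t ∈ Set.Ioc (-Real.pi) Real.pi)
    (hc : Real.cos t = -(1/2)) (hs : 0 < Real.sin t) : t = 2 * Real.pi / 3 := by
  have hpi := Real.pi_pos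
  have ht0 : 0 < t := by
    by_contra h
    push_neg at h
    have := Real.sin_nonpos_of_nonpos_of_neg_pi_le h ht.1.le
    linarith
  have htpi : t < Real.pi := by
    rcases lt_or_eq_of_le ht.2 with h | h
    · exact h
    · rw [h, Real.sin_pi] at hs; linarith
  have h1 : t ∈ Set.Icc 0 Real.pi := ⟨ht0.le, htpi.le⟩
  have h2 : 2 * Real.pi / 3 ∈ Set.Icc 0 Real.pi := by
    constructor <;> nlinarith
  exact Real.injOn_cos h1 h2 (by rw [hc, cos_two_pi_div_three])

private lemma eq_neg_two_pi_div_three (t : ℝ) (ht : t ∈ Set.Ioc (-Real.pi) Real.pi)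
    (hc : Real.cos t = -(1/2)) (hs : Real.sin t < 0) : t = -(2 * Real.pi / 3) := by
  have hpi := Real.pi_pos
  have htpi : t < Real.pi := by
    rcases lt_or_eq_of_le ht.2 with h | h
    · exact h
    · rw [h, Real.sin_pi] at hs; linarith
  have h : -t = 2 * Real.pi / 3 := by
    apply eq_two_pi_div_three
    · exact ⟨by linarith, by linarith [ht.1]⟩
    · rw [Real.cos_neg]; exact hc
    · rw [Real.sin_neg]; linarith
  linarith

/-- For `x ∈ (-π,π]²`, the gradient of `F` vanishes at `x` iff `x` belongs to the
six-element set `{(π,π), (0,π), (0,0), (π,0), (2π/3,-2π/3), (-2π/3,2π/3)}`. -/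
theorem critical_points_symbF (x : ℝ × ℝ)
    (hx1 : x.1 ∈ Set.Ioc (-Real.pi) Real.pi) (hx2 : x.2 ∈ Set.Ioc (-Real.pi) Real.pi) :
    (Real.sin x.1 + Real.sin (x.1 - x.2) = 0 ∧ Real.sin x.2 - Real.sin (x.1 - x.2) = 0) ↔
      x ∈ ({(Real.pi, Real.pi), (0, Real.pi), (0, 0), (Real.pi, 0),
            (2 * Real.pi / 3, -(2 * Real.pi / 3)),
            (-(2 * Real.pi / 3), 2 * Real.pi / 3)} : Set (ℝ × ℝ)) := by
  obtain ⟨a, b⟩ := x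
  simp only at hx1 hx2
  have hpi := Real.pi_pos
  constructor
  · rintro ⟨h1, h2⟩
    rw [Real.sin_sub] at h1 h2
    have hsb : Real.sin b = -Real.sin a := by linarith
    have hkey : Real.sin a * (1 + Real.cos b + Real.cos a) = 0 := by
      rw [hsb] at h1; nlinarith [h1]
    rcases mul_eq_zero.mp hkey with hsa | hsum
    · -- sin a = 0
      have hsb0 : Real.sin b = 0 := by rw [hsb, hsa]; ring
      rcases sin_zero_cases a hx1 hsa with ha | ha <;>
        rcases sin_zero_cases b hx2 hsb0 with hb | hb <;>
        simp [ha, hb, Prod.ext_iff]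
    · -- cos a + cos b = -1
      have hsa : Real.sin a ≠ 0 := by
        intro h
        rw [h, neg_zero] at hsb
        have pya := Real.sin_sq_add_cos_sq a
        have pyb := Real.sin_sq_add_cos_sq b
        rw [h] at pya
        rw [hsb] at pyb
        have hca2 : Real.cos a ^ 2 = 1 := by linarith
        have hcb2 : Real.cos b ^ 2 = 1 := by linarith
        have hprod : Real.cos a * Real.cos b = -(1/2) := by nlinarith [hca2, hcb2, hsum]
        have hsq : (Real.cos a * Real.cos b) ^ 2 = 1 := by rw [mul_pow, hca2, hcb2]; norm_num
        rw [hprod] at hsq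
        norm_num at hsq
      have pya := Real.sin_sq_add_cos_sq a
      have pyb := Real.sin_sq_add_cos_sq b
      have hca : Real.cos a = -(1/2) := by
        rw [hsb] at pyb
        nlinarith [pya, pyb, hsum]
      have hcb : Real.cos b = -(1/2) := by linarith
      rcases lt_or_gt_of_ne hsa with hneg | hpos
      · have ha := eq_neg_two_pi_div_three a hx1 hca hneg
        have hb := eq_two_pi_div_three b hx2 hcb (by rw [hsb]; linarith)
        simp [ha, hb, Prod.ext_iff]
      · have ha := eq_two_pi_div_three a hx1 hca hpos
        have hb := eq_neg_two_pi_div_three b hx2 hcb (by rw [hsb]; linarith)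
        simp [ha, hb, Prod.ext_iff]
  · intro hmem
    have e1 : 2 * Real.pi / 3 = Real.pi - Real.pi / 3 := by ring
    have s1 : Real.sin (2 * Real.pi / 3) = Real.sin (Real.pi / 3) := by
      rw [e1, Real.sin_pi_sub]
    have s2 : Real.sin (4 * Real.pi / 3) = -Real.sin (Real.pi / 3) := by
      have : 4 * Real.pi / 3 = Real.pi + Real.pi / 3 := by ring
      rw [this, Real.sin_add, Real.sin_pi, Real.cos_pi]; ring
    simp only [Set.mem_insert_iff, Set.mem_singleton_iff, Prod.ext_iff] at hmem
    rcases hmem with ⟨h1, h2⟩ | ⟨h1, h2⟩ | ⟨h1, h2⟩ | ⟨h1, h2⟩ | ⟨h1, h2⟩ | ⟨h1, h2⟩ <;>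
        subst h1 <;> subst h2
    · simp [Real.sin_pi]
    · rw [show (0:ℝ) - Real.pi = -Real.pi by ring]
      simp [Real.sin_pi, Real.sin_neg]
    · simp
    · simp [Real.sin_pi]
    · rw [show 2 * Real.pi / 3 - -(2 * Real.pi / 3) = 4 * Real.pi / 3 by ring]
      constructor
      · linarith [s1, s2]
      · rw [Real.sin_neg]; linarith [s1, s2]
    · rw [show -(2 * Real.pi / 3) - 2 * Real.pi / 3 = -(4 * Real.pi / 3) by ring,
        Real.sin_neg, Real.sin_neg]
      constructor <;> linarith [s1, s2]
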